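/- Combined pooling improvement: under the hypotheses of the previous two statements with q*'(v̂) > 0, φ'(v̂) finite, f(v̂) > 0 and F(v̂) < 1, there exists Δ₀ > 0 such that for all 0 < Δ < Δ₀, the profit gain from pooling values, (μ_q(Δ) − q*(v̂−Δ))(μ_v(Δ) − (v̂−Δ))(1 − F(v̂−Δ)), strictly exceeds the virtual-surplus loss from pooling qualities, ∫_{v̂−Δ}^{v̂+Δ}(φ(v)−μ_φ(Δ))(q*(v)−μ_q(Δ))f(v)dv. -/

import Mathlib

open MeasureTheory intervalIntegral Filter

private lemma habs_sub' (x y : ℝ) : |x - y| ≤ |x| + |y| := by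
  rw [sub_eq_add_neg]
  exact le_trans (abs_add_le _ _) (by rw [abs_neg])

/-- Averaging bound: if `|g - g₀| ≤ C` on `[l,u]` then the `f`-weighted average of `g`
is within `C` of `g₀`. -/
lemma avg_sub_le (f g : ℝ → ℝ) (l u g₀ C : ℝ) (hlu : l ≤ u)
    (hintf : IntervalIntegrable f volume l u)
    (hintgf : IntervalIntegrable (fun v => g v * f v) volume l u)
    (hf0 : ∀ v ∈ Set.Icc l u, 0 ≤ f v)
    (hg : ∀ v ∈ Set.Icc l u, |g v - g₀| ≤ C)
    (hden : 0 < ∫ v in l..u, f v) :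
    |(∫ v in l..u, g v * f v) / (∫ v in l..u, f v) - g₀| ≤ C := by
  set den := ∫ v in l..u, f v with hdendef
  set num := ∫ v in l..u, g v * f v with hnumdef
  have hintsub : IntervalIntegrable (fun v => (g v - g₀) * f v) volume l u := by
    have := hintgf.sub (hintf.const_mul g₀)
    simpa [sub_mul] using this
  have hintabs : IntervalIntegrable (fun v => |g v - g₀| * |f v|) volume l u := by
    simpa [abs_mul] using hintsub.abs
  have h1 : num - g₀ * den = ∫ v in l..u, (g v - g₀) * f v := by
    rw [hnumdef, hdendef, ← intervalIntegral.integral_const_mul,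
      ← intervalIntegral.integral_sub hintgf (hintf.const_mul g₀)]
    congr 1; funext v; ring
  have key : |num - g₀ * den| ≤ C * den := by
    rw [h1]
    calc |∫ v in l..u, (g v - g₀) * f v| ≤ ∫ v in l..u, |g v - g₀| * |f v| := by
          simpa [Real.norm_eq_abs, abs_mul] using
            intervalIntegral.norm_integral_le_integral_norm (f := fun v => (g v - g₀) * f v)
              (μ := volume) hlu
      _ ≤ ∫ v in l..u, C * f v := by
          apply intervalIntegral.integral_mono_on hlu hintabs (hintf.const_mul C)
          intro x hx
          rw [abs_of_nonneg (hf0 x hx)]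
          exact mul_le_mul_of_nonneg_right (hg x hx) (hf0 x hx)
      _ = C * den := intervalIntegral.integral_const_mul _ _
  have heq : num / den - g₀ = (num - g₀ * den) / den := by
    field_simp
  rw [heq, abs_div, abs_of_pos hden, div_le_iff₀ hden]
  exact key

set_option maxHeartbeats 1000000 in
/-- For small `Δ`, the gain from pooling values strictly exceeds the virtual-surplus loss
from pooling qualities on `(v̂-Δ, v̂+Δ)`. -/
theorem pooling_improves (a b vh : ℝ) (hvh : vh ∈ Set.Ioo a b)
    (F f φ qs : ℝ → ℝ)
    (hf : ContinuousOn f (Set.Icc a b))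
    (hfpos : ∀ v ∈ Set.Icc a b, 0 < f v)
    (hF : ∀ v ∈ Set.Icc a b, F v = ∫ t in a..v, f t)
    (hφ : ∀ v ∈ Set.Icc a b, φ v = v - (1 - F v) / f v)
    (hqmono : MonotoneOn qs (Set.Icc a b))
    (hqd : DifferentiableAt ℝ qs vh)
    (hφd : DifferentiableAt ℝ φ vh)
    (hq' : 0 < deriv qs vh)
    (hFvh : F vh < 1)
    (μφ μq μv : ℝ → ℝ)
    (hμφ : ∀ Δ, μφ Δ = (∫ v in vh - Δ..vh + Δ, φ v * f v) / (∫ v in vh - Δ..vh + Δ, f v))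
    (hμq : ∀ Δ, μq Δ = (∫ v in vh - Δ..vh + Δ, qs v * f v) / (∫ v in vh - Δ..vh + Δ, f v))
    (hμv : ∀ Δ, μv Δ = (∫ v in vh - Δ..vh + Δ, v * f v) / (∫ v in vh - Δ..vh + Δ, f v)) :
    ∃ Δ₀ > 0, ∀ Δ : ℝ, 0 < Δ → Δ < Δ₀ →
      (∫ v in vh - Δ..vh + Δ, (φ v - μφ Δ) * (qs v - μq Δ) * f v)
        < (μq Δ - qs (vh - Δ)) * (μv Δ - (vh - Δ)) * (1 - F (vh - Δ)) := by
  obtain ⟨hav, hvb⟩ := hvh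
  have hab : a ≤ b := le_of_lt (lt_trans hav hvb)
  have hvhmem : vh ∈ Set.Icc a b := ⟨le_of_lt hav, le_of_lt hvb⟩
  -- min and max of f on [a,b]
  obtain ⟨xm, hxm, hxmin⟩ := isCompact_Icc.exists_isMinOn ⟨vh, hvhmem⟩ hf
  obtain ⟨xM, hxM, hxmax⟩ := isCompact_Icc.exists_isMaxOn ⟨vh, hvhmem⟩ hf
  set m := f xm with hmdef
  set M := f xM with hMdef
  have hm0 : 0 < m := hfpos xm hxm
  have hmle : ∀ v ∈ Set.Icc a b, m ≤ f v := fun v hv => hxmin hv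
  have hleM : ∀ v ∈ Set.Icc a b, f v ≤ M := fun v hv => hxmax hv
  have hM0 : 0 < M := lt_of_lt_of_le hm0 (hmle xM hxM)
  set q' := deriv qs vh with hq'def
  -- local linear bounds from differentiability
  have hqlin : ∀ᶠ v in nhds vh, |qs v - qs vh - (v - vh) * q'| ≤ q' / 2 * |v - vh| := by
    have h := hasDerivAt_iff_isLittleO.mp hqd.hasDerivAt
    filter_upwards [h.def (half_pos hq')] with v hv
    simpa [Real.norm_eq_abs, smul_eq_mul] using hv
  set C₁ := |deriv φ vh| + 1 with hC₁def
  have hC₁0 : 0 < C₁ := by positivity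
  have hφlin : ∀ᶠ v in nhds vh, |φ v - φ vh| ≤ C₁ * |v - vh| := by
    have h := hasDerivAt_iff_isLittleO.mp hφd.hasDerivAt
    filter_upwards [h.def one_pos] with v hv
    simp only [Real.norm_eq_abs, smul_eq_mul] at hv
    calc |φ v - φ vh| = |(φ v - φ vh - (v - vh) * deriv φ vh) + (v - vh) * deriv φ vh| := by
          congr 1; ring
      _ ≤ |φ v - φ vh - (v - vh) * deriv φ vh| + |(v - vh) * deriv φ vh| := abs_add_le _ _
      _ ≤ 1 * |v - vh| + |v - vh| * |deriv φ vh| := by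
          rw [abs_mul]; exact add_le_add hv le_rfl
      _ = C₁ * |v - vh| := by rw [hC₁def]; ring
  obtain ⟨δ₁, hδ₁0, hδ₁⟩ := Metric.eventually_nhds_iff.mp hqlin
  obtain ⟨δ₂, hδ₂0, hδ₂⟩ := Metric.eventually_nhds_iff.mp hφlin
  -- continuity of F and φ on [a,b]
  have hFint : IntegrableOn f (Set.uIcc a b) volume := by
    rw [Set.uIcc_of_le hab]
    exact hf.integrableOn_Icc
  have hFcont : ContinuousOn F (Set.Icc a b) := by
    have := intervalIntegral.continuousOn_primitive_interval (f := f) (μ := volume) hFint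
    rw [Set.uIcc_of_le hab] at this
    exact this.congr hF
  have hφcont : ContinuousOn φ (Set.Icc a b) := by
    have h1 : ContinuousOn (fun v => v - (1 - F v) / f v) (Set.Icc a b) :=
      (continuousOn_id).sub ((continuousOn_const.sub hFcont).div hf
        (fun v hv => ne_of_gt (hfpos v hv)))
    exact h1.congr hφ
  -- constants
  set c := 1 - F vh with hcdef
  have hc0 : 0 < c := by rw [hcdef]; linarith
  set A := q' * m / (4 * M) with hAdef
  have hA0 : 0 < A := by positivity
  set B := m / (2 * M) with hBdef
  have hB0 : 0 < B := by positivity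
  set K := A * B * c with hKdef
  have hK0 : 0 < K := by positivity
  set T := K / (12 * C₁ * q' * M) with hTdef
  have h12 : 0 < 12 * C₁ * q' * M :=
    mul_pos (mul_pos (mul_pos (by norm_num) hC₁0) hq') hM0
  have hT0 : 0 < T := div_pos hK0 h12
  refine ⟨min (min δ₁ δ₂) (min (min (vh - a) (b - vh)) T),
    lt_min (lt_min hδ₁0 hδ₂0) (lt_min (lt_min (by linarith) (by linarith)) hT0), ?_⟩
  intro Δ hΔ0 hΔlt
  have hΔδ₁ : Δ < δ₁ := lt_of_lt_of_le hΔlt (le_trans (min_le_left _ _) (min_le_left _ _))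
  have hΔδ₂ : Δ < δ₂ := lt_of_lt_of_le hΔlt (le_trans (min_le_left _ _) (min_le_right _ _))
  have hΔa : Δ < vh - a := lt_of_lt_of_le hΔlt
    (le_trans (min_le_right _ _) (le_trans (min_le_left _ _) (min_le_left _ _)))
  have hΔb : Δ < b - vh := lt_of_lt_of_le hΔlt
    (le_trans (min_le_right _ _) (le_trans (min_le_left _ _) (min_le_right _ _)))
  have hΔT : Δ < T := lt_of_lt_of_le hΔlt (le_trans (min_le_right _ _) (min_le_right _ _))
  set l := vh - Δ with hldef
  set u := vh + Δ with hudef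
  have hlu : l ≤ u := by rw [hldef, hudef]; linarith
  have hlv : l ≤ vh := by rw [hldef]; linarith
  have hvu : vh ≤ u := by rw [hudef]; linarith
  have hal : a ≤ l := by rw [hldef]; linarith
  have hub : u ≤ b := by rw [hudef]; linarith
  have hsub : Set.Icc l u ⊆ Set.Icc a b := Set.Icc_subset_Icc hal hub
  have hsubI : Set.uIcc l u ⊆ Set.Icc a b := by rw [Set.uIcc_of_le hlu]; exact hsub
  have hsub1 : Set.uIcc l vh ⊆ Set.Icc a b := by
    rw [Set.uIcc_of_le hlv]; exact Set.Icc_subset_Icc hal hvhmem.2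
  have hsub2 : Set.uIcc vh u ⊆ Set.Icc a b := by
    rw [Set.uIcc_of_le hvu]; exact Set.Icc_subset_Icc hvhmem.1 hub
  -- membership facts
  have hlmem : l ∈ Set.Icc a b := hsub ⟨le_rfl, hlu⟩
  have humem : u ∈ Set.Icc a b := hsub ⟨hlu, le_rfl⟩
  -- integrability on [l,u] and subintervals
  have intf : IntervalIntegrable f volume l u := (hf.mono hsubI).intervalIntegrable
  have intf1 : IntervalIntegrable f volume l vh := (hf.mono hsub1).intervalIntegrable
  have intf2 : IntervalIntegrable f volume vh u := (hf.mono hsub2).intervalIntegrable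
  have intqs : IntervalIntegrable qs volume l u := (hqmono.mono hsubI).intervalIntegrable
  have intqsf : IntervalIntegrable (fun v => qs v * f v) volume l u :=
    intqs.mul_continuousOn (hf.mono hsubI)
  have intφf : IntervalIntegrable (fun v => φ v * f v) volume l u :=
    ((hφcont.mono hsubI).mul (hf.mono hsubI)).intervalIntegrable
  have intvf : IntervalIntegrable (fun v => v * f v) volume l u :=
    ((continuousOn_id.mono hsubI).mul (hf.mono hsubI)).intervalIntegrable
  -- pointwise bounds on f over [l,u]
  have hf0lu : ∀ v ∈ Set.Icc l u, 0 ≤ f v := fun v hv => le_of_lt (hfpos v (hsub hv))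
  -- denominator bounds
  set den := ∫ v in l..u, f v with hdendef
  have hdenlb : 2 * m * Δ ≤ den := by
    have heq : (∫ _ in l..u, m) = 2 * m * Δ := by
      rw [intervalIntegral.integral_const, smul_eq_mul, hudef, hldef]; ring
    rw [← heq]
    exact intervalIntegral.integral_mono_on hlu intervalIntegrable_const intf
      (fun x hx => hmle x (hsub hx))
  have hdenub : den ≤ 2 * M * Δ := by
    have heq : (∫ _ in l..u, M) = 2 * M * Δ := by
      rw [intervalIntegral.integral_const, smul_eq_mul, hudef, hldef]; ring
    rw [← heq]
    exact intervalIntegral.integral_mono_on hlu intf intervalIntegrable_const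
      (fun x hx => hleM x (hsub hx))
  have hden0 : 0 < den := lt_of_lt_of_le (by positivity) hdenlb
  -- distance bounds inside the interval
  have hdist : ∀ v ∈ Set.Icc l u, |v - vh| ≤ Δ := by
    intro v hv
    obtain ⟨h1, h2⟩ := hv
    rw [hldef] at h1
    rw [hudef] at h2
    rw [abs_le]
    constructor <;> linarith
  have hqbnd : ∀ v ∈ Set.Icc l u, |qs v - qs vh| ≤ 3 * q' / 2 * Δ := by
    intro v hv
    have hd : dist v vh < δ₁ := by
      rw [Real.dist_eq]; exact lt_of_le_of_lt (hdist v hv) hΔδ₁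
    have h := hδ₁ hd
    calc |qs v - qs vh| = |(qs v - qs vh - (v - vh) * q') + (v - vh) * q'| := by
          congr 1; ring
      _ ≤ |qs v - qs vh - (v - vh) * q'| + |(v - vh) * q'| := abs_add_le _ _
      _ ≤ q' / 2 * |v - vh| + |v - vh| * q' := by
          rw [abs_mul, abs_of_pos hq']; exact add_le_add h le_rfl
      _ = 3 * q' / 2 * |v - vh| := by ring
      _ ≤ 3 * q' / 2 * Δ := mul_le_mul_of_nonneg_left (hdist v hv) (by positivity)
  have hφbnd : ∀ v ∈ Set.Icc l u, |φ v - φ vh| ≤ C₁ * Δ := by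
    intro v hv
    have hd : dist v vh < δ₂ := by
      rw [Real.dist_eq]; exact lt_of_le_of_lt (hdist v hv) hΔδ₂
    exact le_trans (hδ₂ hd) (mul_le_mul_of_nonneg_left (hdist v hv) (le_of_lt hC₁0))
  -- bounds on the averages
  have hμqbnd : |μq Δ - qs vh| ≤ 3 * q' / 2 * Δ := by
    rw [hμq Δ]
    exact avg_sub_le f qs l u (qs vh) (3 * q' / 2 * Δ) hlu intf intqsf hf0lu hqbnd hden0
  have hμφbnd : |μφ Δ - φ vh| ≤ C₁ * Δ := by
    rw [hμφ Δ]
    exact avg_sub_le f φ l u (φ vh) (C₁ * Δ) hlu intf intφf hf0lu hφbnd hden0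
  -- LHS bound
  have hLHS : (∫ v in l..u, (φ v - μφ Δ) * (qs v - μq Δ) * f v) ≤ 12 * C₁ * q' * M * Δ ^ 3 := by
    have hb : ∀ x ∈ Set.uIoc l u, ‖(φ x - μφ Δ) * (qs x - μq Δ) * f x‖ ≤
        (2 * C₁ * Δ) * (3 * q' * Δ) * M := by
      intro x hx
      have hx' : x ∈ Set.Icc l u := by
        rw [Set.uIoc_of_le hlu] at hx
        exact ⟨le_of_lt hx.1, hx.2⟩
      have h1 : |φ x - μφ Δ| ≤ 2 * C₁ * Δ := by
        calc |φ x - μφ Δ| = |(φ x - φ vh) - (μφ Δ - φ vh)| := by congr 1; ring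
          _ ≤ |φ x - φ vh| + |μφ Δ - φ vh| := habs_sub' _ _
          _ ≤ C₁ * Δ + C₁ * Δ := add_le_add (hφbnd x hx') hμφbnd
          _ = 2 * C₁ * Δ := by ring
      have h2 : |qs x - μq Δ| ≤ 3 * q' * Δ := by
        calc |qs x - μq Δ| = |(qs x - qs vh) - (μq Δ - qs vh)| := by congr 1; ring
          _ ≤ |qs x - qs vh| + |μq Δ - qs vh| := habs_sub' _ _
          _ ≤ 3 * q' / 2 * Δ + 3 * q' / 2 * Δ := add_le_add (hqbnd x hx') hμqbnd
          _ = 3 * q' * Δ := by ring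
      have h3 : |f x| ≤ M := by
        rw [abs_of_nonneg (hf0lu x hx')]; exact hleM x (hsub hx')
      calc ‖(φ x - μφ Δ) * (qs x - μq Δ) * f x‖ = |φ x - μφ Δ| * |qs x - μq Δ| * |f x| := by
            rw [Real.norm_eq_abs, abs_mul, abs_mul]
        _ ≤ (2 * C₁ * Δ) * (3 * q' * Δ) * M :=
            mul_le_mul (mul_le_mul h1 h2 (abs_nonneg _) (by positivity)) h3
              (abs_nonneg _) (by positivity)
    have hnorm := intervalIntegral.norm_integral_le_of_norm_le_const hb
    have h4 : |u - l| = 2 * Δ := by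
      rw [hudef, hldef, show vh + Δ - (vh - Δ) = 2 * Δ by ring, abs_of_pos (by linarith)]
    rw [h4, Real.norm_eq_abs] at hnorm
    calc (∫ v in l..u, (φ v - μφ Δ) * (qs v - μq Δ) * f v)
        ≤ |∫ v in l..u, (φ v - μφ Δ) * (qs v - μq Δ) * f v| := le_abs_self _
      _ ≤ (2 * C₁ * Δ) * (3 * q' * Δ) * M * (2 * Δ) := hnorm
      _ = 12 * C₁ * q' * M * Δ ^ 3 := by ring
  -- lower bound on qs vh - qs l
  have hqslb : q' / 2 * Δ ≤ qs vh - qs l := by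
    have hd : dist l vh < δ₁ := by
      rw [Real.dist_eq, hldef, show vh - Δ - vh = -Δ by ring, abs_neg, abs_of_pos hΔ0]
      exact hΔδ₁
    have h := hδ₁ hd
    rw [hldef, show vh - Δ - vh = -Δ by ring, abs_neg, abs_of_pos hΔ0] at h
    rw [abs_le] at h
    obtain ⟨ha1, ha2⟩ := h
    nlinarith
  -- lower bound on μq Δ - qs l
  have hnum1 : q' / 2 * Δ * m * Δ ≤ ∫ v in l..u, (qs v - qs l) * f v := by
    have int1 : IntervalIntegrable (fun v => (qs v - qs l) * f v) volume l vh :=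
      (((hqmono.mono hsub1).intervalIntegrable.sub
        intervalIntegrable_const).mul_continuousOn (hf.mono hsub1))
    have int2 : IntervalIntegrable (fun v => (qs v - qs l) * f v) volume vh u :=
      (((hqmono.mono hsub2).intervalIntegrable.sub
        intervalIntegrable_const).mul_continuousOn (hf.mono hsub2))
    rw [← intervalIntegral.integral_add_adjacent_intervals int1 int2]
    have h1 : (0:ℝ) ≤ ∫ v in l..vh, (qs v - qs l) * f v := by
      apply intervalIntegral.integral_nonneg hlv
      intro x hx
      have hx' : x ∈ Set.Icc l u := ⟨hx.1, le_trans hx.2 hvu⟩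
      apply mul_nonneg _ (hf0lu x hx')
      have := hqmono hlmem (hsub hx') hx.1
      linarith
    have h2 : q' / 2 * Δ * m * Δ ≤ ∫ v in vh..u, (qs v - qs l) * f v := by
      have hmono : ∀ x ∈ Set.Icc vh u, q' / 2 * Δ * m ≤ (qs x - qs l) * f x := by
        intro x hx
        have hx' : x ∈ Set.Icc l u := ⟨le_trans hlv hx.1, hx.2⟩
        have hq1 : q' / 2 * Δ ≤ qs x - qs l := by
          have := hqmono hvhmem (hsub hx') hx.1
          linarith
        have hfm : m ≤ f x := hmle x (hsub hx')
        calc q' / 2 * Δ * m ≤ (qs x - qs l) * m :=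
              mul_le_mul_of_nonneg_right hq1 (le_of_lt hm0)
          _ ≤ (qs x - qs l) * f x := mul_le_mul_of_nonneg_left hfm (le_trans (by positivity) hq1)
      have heq : (∫ _ in vh..u, q' / 2 * Δ * m) = q' / 2 * Δ * m * Δ := by
        rw [intervalIntegral.integral_const, smul_eq_mul, hudef]; ring
      rw [← heq]
      exact intervalIntegral.integral_mono_on hvu
        intervalIntegrable_const int2 hmono
    linarith
  have hμqlb : A * Δ ≤ μq Δ - qs l := by
    rw [hμq Δ]
    have hnum : (∫ v in l..u, qs v * f v) - qs l * den = ∫ v in l..u, (qs v - qs l) * f v := by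
      rw [hdendef, ← intervalIntegral.integral_const_mul,
        ← intervalIntegral.integral_sub intqsf (intf.const_mul (qs l))]
      congr 1; funext v; ring
    have hrw : (∫ v in l..u, qs v * f v) / den - qs l
        = ((∫ v in l..u, qs v * f v) - qs l * den) / den := by
      field_simp
    rw [hrw, hnum, le_div_iff₀ hden0]
    calc A * Δ * den ≤ A * Δ * (2 * M * Δ) :=
          mul_le_mul_of_nonneg_left hdenub (by positivity)
      _ = q' / 2 * Δ * m * Δ := by rw [hAdef]; field_simp; ring
      _ ≤ ∫ v in l..u, (qs v - qs l) * f v := hnum1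
  -- lower bound on μv Δ - l
  have hnum2 : m * Δ * Δ ≤ ∫ v in l..u, (v - l) * f v := by
    have int1 : IntervalIntegrable (fun v => (v - l) * f v) volume l vh :=
      ((continuousOn_id.sub continuousOn_const).mul (hf.mono hsub1)).intervalIntegrable
    have int2 : IntervalIntegrable (fun v => (v - l) * f v) volume vh u :=
      ((continuousOn_id.sub continuousOn_const).mul (hf.mono hsub2)).intervalIntegrable
    rw [← intervalIntegral.integral_add_adjacent_intervals int1 int2]
    have h1 : (0:ℝ) ≤ ∫ v in l..vh, (v - l) * f v := by
      apply intervalIntegral.integral_nonneg hlv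
      intro x hx
      exact mul_nonneg (by linarith [hx.1]) (hf0lu x ⟨hx.1, le_trans hx.2 hvu⟩)
    have h2 : m * Δ * Δ ≤ ∫ v in vh..u, (v - l) * f v := by
      have hmono : ∀ x ∈ Set.Icc vh u, m * Δ ≤ (x - l) * f x := by
        intro x hx
        have hx' : x ∈ Set.Icc l u := ⟨le_trans hlv hx.1, hx.2⟩
        have h3 : Δ ≤ x - l := by
          have h5 := hx.1
          rw [hldef]
          linarith
        calc m * Δ = Δ * m := by ring
          _ ≤ (x - l) * m := mul_le_mul_of_nonneg_right h3 (le_of_lt hm0)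
          _ ≤ (x - l) * f x := mul_le_mul_of_nonneg_left (hmle x (hsub hx')) (by linarith)
      have heq : (∫ _ in vh..u, m * Δ) = m * Δ * Δ := by
        rw [intervalIntegral.integral_const, smul_eq_mul, hudef]; ring
      rw [← heq]
      exact intervalIntegral.integral_mono_on hvu
        intervalIntegrable_const int2 hmono
    linarith
  have hμvlb : B * Δ ≤ μv Δ - l := by
    rw [hμv Δ]
    have hnum : (∫ v in l..u, v * f v) - l * den = ∫ v in l..u, (v - l) * f v := by
      rw [hdendef, ← intervalIntegral.integral_const_mul,
        ← intervalIntegral.integral_sub intvf (intf.const_mul l)]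
      congr 1; funext v; ring
    have hrw : (∫ v in l..u, v * f v) / den - l
        = ((∫ v in l..u, v * f v) - l * den) / den := by
      field_simp
    rw [hrw, hnum, le_div_iff₀ hden0]
    calc B * Δ * den ≤ B * Δ * (2 * M * Δ) :=
          mul_le_mul_of_nonneg_left hdenub (by positivity)
      _ = m * Δ * Δ := by rw [hBdef]; field_simp
      _ ≤ ∫ v in l..u, (v - l) * f v := hnum2
  -- F (vh - Δ) ≤ F vh
  have hFmono : F l ≤ F vh := by
    rw [hF l hlmem, hF vh hvhmem]
    have hsubal : Set.uIcc a l ⊆ Set.Icc a b := by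
      rw [Set.uIcc_of_le hlmem.1]
      exact Set.Icc_subset_Icc le_rfl hlmem.2
    have intal : IntervalIntegrable f volume a l := (hf.mono hsubal).intervalIntegrable
    rw [← intervalIntegral.integral_add_adjacent_intervals intal intf1]
    have hnn : (0:ℝ) ≤ ∫ t in l..vh, f t := by
      apply intervalIntegral.integral_nonneg hlv
      intro x hx
      exact le_of_lt (hfpos x (hsub ⟨hx.1, le_trans hx.2 hvu⟩))
    linarith
  have hclb : c ≤ 1 - F l := by rw [hcdef]; linarith
  -- RHS lower bound
  have hRHS : K * Δ ^ 2 ≤ (μq Δ - qs l) * (μv Δ - l) * (1 - F l) := by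
    have h1 : A * Δ * (B * Δ) ≤ (μq Δ - qs l) * (μv Δ - l) :=
      mul_le_mul hμqlb hμvlb (by positivity) (le_trans (by positivity) hμqlb)
    have h2 : A * Δ * (B * Δ) * c ≤ (μq Δ - qs l) * (μv Δ - l) * (1 - F l) :=
      mul_le_mul h1 hclb (le_of_lt hc0)
        (mul_nonneg (le_trans (by positivity) hμqlb) (le_trans (by positivity) hμvlb))
    calc K * Δ ^ 2 = A * Δ * (B * Δ) * c := by rw [hKdef]; ring
      _ ≤ _ := h2
  -- combine
  have hmid : 12 * C₁ * q' * M * Δ ^ 3 < K * Δ ^ 2 := by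
    have hx : Δ * (12 * C₁ * q' * M) < K := by
      rw [hTdef] at hΔT
      calc Δ * (12 * C₁ * q' * M) < K / (12 * C₁ * q' * M) * (12 * C₁ * q' * M) :=
            mul_lt_mul_of_pos_right hΔT (by positivity)
        _ = K := by field_simp
    calc 12 * C₁ * q' * M * Δ ^ 3 = (Δ * (12 * C₁ * q' * M)) * Δ ^ 2 := by ring
      _ < K * Δ ^ 2 := mul_lt_mul_of_pos_right hx (by positivity)
  calc (∫ v in l..u, (φ v - μφ Δ) * (qs v - μq Δ) * f v)
      ≤ 12 * C₁ * q' * M * Δ ^ 3 := hLHS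
    _ < K * Δ ^ 2 := hmid
    _ ≤ (μq Δ - qs l) * (μv Δ - l) * (1 - F l) := hRHS
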